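/- If C_1 ≤ 1/2 < C_2, then for every Q ∈ [0, 1−Q_2], P_cor^opt(Q) = q_2 − (1−C_1)Q; equivalently, R_cor^opt(Q) = P_cor^opt(Q)/(1−Q) = (1−C_1) + (C_1−q_1)/(1−Q). -/

import Mathlib

open Matrix ComplexOrder

noncomputable section

namespace FRIR

/-- A three-outcome POVM on a qubit: `M₀` is the inconclusive outcome. -/
def IsPOVM (M₀ M₁ M₂ : Matrix (Fin 2) (Fin 2) ℂ) : Prop :=
  M₀.PosSemidef ∧ M₁.PosSemidef ∧ M₂.PosSemidef ∧ M₀ + M₁ + M₂ = 1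

/-- `ρ₀ = q₁ρ₁ + q₂ρ₂`. -/
def rho0 (q₁ q₂ : ℝ) (ρ₁ ρ₂ : Matrix (Fin 2) (Fin 2) ℂ) : Matrix (Fin 2) (Fin 2) ℂ :=
  (q₁ : ℂ) • ρ₁ + (q₂ : ℂ) • ρ₂

/-- The probability of the inconclusive result, `P_I = tr(ρ₀M₀)`. -/
def PIof (q₁ q₂ : ℝ) (ρ₁ ρ₂ M₀ : Matrix (Fin 2) (Fin 2) ℂ) : ℝ :=
  (Matrix.trace (rho0 q₁ q₂ ρ₁ ρ₂ * M₀)).re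

/-- `P_cor = q₁tr(ρ₁M₁) + q₂tr(ρ₂M₂)`. -/
def Pcor (q₁ q₂ : ℝ) (ρ₁ ρ₂ M₁ M₂ : Matrix (Fin 2) (Fin 2) ℂ) : ℝ :=
  q₁ * (Matrix.trace (ρ₁ * M₁)).re + q₂ * (Matrix.trace (ρ₂ * M₂)).re

/-- `P̄_cor = q·tr(ρ₀M₀) + q₁tr(ρ₁M₁) + q₂tr(ρ₂M₂)`. -/
def PbarCor (q q₁ q₂ : ℝ) (ρ₁ ρ₂ M₀ M₁ M₂ : Matrix (Fin 2) (Fin 2) ℂ) : ℝ :=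
  q * PIof q₁ q₂ ρ₁ ρ₂ M₀ + Pcor q₁ q₂ ρ₁ ρ₂ M₁ M₂

/-- `P̄_cor^opt(q)`: the maximal value of `P̄_cor` over all POVMs. -/
def PbarOpt (q q₁ q₂ : ℝ) (ρ₁ ρ₂ : Matrix (Fin 2) (Fin 2) ℂ) : ℝ :=
  sSup {x : ℝ | ∃ M₀ M₁ M₂, IsPOVM M₀ M₁ M₂ ∧ PbarCor q q₁ q₂ ρ₁ ρ₂ M₀ M₁ M₂ = x}

/-- `P_cor^opt(Q)`: the maximal value of `P_cor` over POVMs with `P_I = Q`. -/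
def PcorOpt (Q q₁ q₂ : ℝ) (ρ₁ ρ₂ : Matrix (Fin 2) (Fin 2) ℂ) : ℝ :=
  sSup {x : ℝ | ∃ M₀ M₁ M₂, IsPOVM M₀ M₁ M₂ ∧
    PIof q₁ q₂ ρ₁ ρ₂ M₀ = Q ∧ Pcor q₁ q₂ ρ₁ ρ₂ M₁ M₂ = x}

/-- `P_I(q) = { tr(ρ₀M₀) : POVMs attaining P̄_cor^opt(q) }`. -/
def PIset (q q₁ q₂ : ℝ) (ρ₁ ρ₂ : Matrix (Fin 2) (Fin 2) ℂ) : Set ℝ :=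
  {Q : ℝ | ∃ M₀ M₁ M₂, IsPOVM M₀ M₁ M₂ ∧
    PbarCor q q₁ q₂ ρ₁ ρ₂ M₀ M₁ M₂ = PbarOpt q q₁ q₂ ρ₁ ρ₂ ∧ PIof q₁ q₂ ρ₁ ρ₂ M₀ = Q}

/-- `q₀⁽⁰⁾ = sup{q > 0 : 0 ∈ P_I(q)}`. -/
def q0low (q₁ q₂ : ℝ) (ρ₁ ρ₂ : Matrix (Fin 2) (Fin 2) ℂ) : ℝ :=
  sSup {q : ℝ | 0 < q ∧ (0 : ℝ) ∈ PIset q q₁ q₂ ρ₁ ρ₂}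

/-- `q₀⁽¹⁾ = inf{q > 0 : 1 ∈ P_I(q)}`. -/
def q0high (q₁ q₂ : ℝ) (ρ₁ ρ₂ : Matrix (Fin 2) (Fin 2) ℂ) : ℝ :=
  sInf {q : ℝ | 0 < q ∧ (1 : ℝ) ∈ PIset q q₁ q₂ ρ₁ ρ₂}

section AuxLemmas
set_option linter.unusedSectionVars false
variable {n : Type*} [Fintype n] [DecidableEq n]
open scoped MatrixOrder

lemma vmv_mulVec (u v x : n → ℂ) : vecMulVec u v *ᵥ x = (v ⬝ᵥ x) • u := by
  ext i
  simp [mulVec, vecMulVec_apply, dotProduct, Finset.mul_sum, mul_comm, mul_left_comm]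

lemma mul_vmv (A : Matrix n n ℂ) (u v : n → ℂ) :
    A * vecMulVec u v = vecMulVec (A *ᵥ u) v := by
  ext i j
  simp only [mul_apply, vecMulVec_apply, mulVec, dotProduct, Finset.sum_mul]
  exact Finset.sum_congr rfl fun k _ => by ring

lemma vmv_mul (u v : n → ℂ) (A : Matrix n n ℂ) :
    vecMulVec u v * A = vecMulVec u (v ᵥ* A) := by
  ext i j
  simp only [mul_apply, vecMulVec_apply, vecMul, dotProduct, Finset.mul_sum]
  exact Finset.sum_congr rfl fun k _ => by ring

lemma vmv_mul_vmv (u v u' v' : n → ℂ) :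
    vecMulVec u v * vecMulVec u' v' = (v ⬝ᵥ u') • vecMulVec u v' := by
  rw [mul_vmv, vmv_mulVec]
  ext i j
  simp [vecMulVec_apply, smul_eq_mul]
  ring

lemma trace_vmv (u v : n → ℂ) : (vecMulVec u v).trace = v ⬝ᵥ u := by
  simp [Matrix.trace, Matrix.diag, vecMulVec_apply, dotProduct, mul_comm]

lemma vmv_posSemidef (v : n → ℂ) : (vecMulVec v (star v)).PosSemidef := by
  refine Matrix.PosSemidef.of_dotProduct_mulVec_nonneg ?_ ?_
  · ext i j
    simp [conjTranspose_apply, vecMulVec_apply, mul_comm]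
  · intro x
    rw [vmv_mulVec]
    have : star x ⬝ᵥ (star v ⬝ᵥ x) • v = (star v ⬝ᵥ x) * (star x ⬝ᵥ v) := by
      simp [dotProduct_smul, smul_eq_mul, mul_comm]
    rw [this]
    have hsc : star x ⬝ᵥ v = star (star v ⬝ᵥ x) := by
      rw [star_dotProduct]
    rw [hsc]
    exact mul_star_self_nonneg _

lemma trace_nonneg' {M : Matrix n n ℂ} (hM : M.PosSemidef) : 0 ≤ M.trace := by
  have h : ∀ i, 0 ≤ M i i := by
    intro i
    have := hM.dotProduct_mulVec_nonneg (Pi.single i 1)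
    simpa [dotProduct, Pi.single_apply] using this
  exact Finset.sum_nonneg fun i _ => h i

lemma trace_mul_nonneg {A B : Matrix n n ℂ} (hA : A.PosSemidef) (hB : B.PosSemidef) :
    0 ≤ (A * B).trace := by
  have h1 : A = CFC.sqrt A * CFC.sqrt A := (CFC.sqrt_mul_sqrt_self A hA.nonneg).symm
  have h2 : (A * B).trace = (CFC.sqrt A * B * CFC.sqrt A).trace := by
    conv_lhs => rw [h1]
    rw [Matrix.mul_assoc, Matrix.trace_mul_comm]
  rw [h2]
  refine trace_nonneg' ?_
  have := hB.mul_mul_conjTranspose_same (CFC.sqrt A)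
  rwa [(CFC.sqrt_nonneg A).posSemidef.isHermitian.eq] at this

lemma trace_mul_re_nonneg {A B : Matrix n n ℂ} (hA : A.PosSemidef) (hB : B.PosSemidef) :
    0 ≤ ((A * B).trace).re :=
  (Complex.le_def.mp (trace_mul_nonneg hA hB)).1

lemma smul_posSemidef {r : ℝ} (hr : 0 ≤ r) {A : Matrix n n ℂ} (hA : A.PosSemidef) :
    ((r : ℂ) • A).PosSemidef := by
  refine Matrix.PosSemidef.of_dotProduct_mulVec_nonneg ?_ ?_
  · ext i j
    simp [conjTranspose_apply, hA.1.apply]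
  · intro x
    rw [smul_mulVec, dotProduct_smul]
    exact smul_nonneg (by exact_mod_cast hr) (hA.dotProduct_mulVec_nonneg x)

lemma herm_swap {A : Matrix n n ℂ} (hA : A.IsHermitian) (x y : n → ℂ) :
    star y ⬝ᵥ (A *ᵥ x) = star (star x ⬝ᵥ (A *ᵥ y)) := by
  rw [star_dotProduct, star_mulVec, hA.eq, ← dotProduct_mulVec]

lemma resolution (ν₁ ν₂ : Fin 2 → ℂ)
    (h1 : star ν₁ ⬝ᵥ ν₁ = 1) (h2 : star ν₂ ⬝ᵥ ν₂ = 1) (h12 : star ν₁ ⬝ᵥ ν₂ = 0) :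
    vecMulVec ν₁ (star ν₁) + vecMulVec ν₂ (star ν₂) = 1 := by
  have h21 : star ν₂ ⬝ᵥ ν₁ = 0 := by
    have := congrArg star h12
    rwa [star_dotProduct, star_star, star_zero] at this
  set U : Matrix (Fin 2) (Fin 2) ℂ := Matrix.of fun i j => if j = 0 then ν₁ i else ν₂ i with hU
  have hUU : Uᴴ * U = 1 := by
    ext i j
    fin_cases i <;> fin_cases j
    · simpa [mul_apply, conjTranspose_apply, hU, dotProduct, Fin.sum_univ_two, mul_comm] using h1
    · simpa [mul_apply, conjTranspose_apply, hU, dotProduct, Fin.sum_univ_two, mul_comm] using h12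
    · simpa [mul_apply, conjTranspose_apply, hU, dotProduct, Fin.sum_univ_two, mul_comm] using h21
    · simpa [mul_apply, conjTranspose_apply, hU, dotProduct, Fin.sum_univ_two, mul_comm] using h2
  have hUU' : U * Uᴴ = 1 := mul_eq_one_comm.mp hUU
  ext i j
  have := congrFun (congrFun hUU' i) j
  simp only [mul_apply, conjTranspose_apply, hU, Fin.sum_univ_two, of_apply] at this
  simpa [vecMulVec_apply, Pi.star_apply] using this

lemma cs_dot (w x : n → ℂ) :
    Complex.normSq (star w ⬝ᵥ x) ≤ (star w ⬝ᵥ w).re * (star x ⬝ᵥ x).re := by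
  let w' : EuclideanSpace ℂ n := WithLp.toLp 2 w
  let x' : EuclideanSpace ℂ n := WithLp.toLp 2 x
  have hinner : inner ℂ w' x' = star w ⬝ᵥ x := by
    simp [PiLp.inner_apply, RCLike.inner_apply, dotProduct, w', x', mul_comm]
  have hw : (star w ⬝ᵥ w).re = ‖w'‖ ^ 2 := by
    have := @inner_self_eq_norm_sq ℂ _ _ _ _ w'
    rw [← this]
    have h2 : inner ℂ w' w' = star w ⬝ᵥ w := by
      rw [PiLp.inner_apply]; simp [RCLike.inner_apply, dotProduct, w', Complex.conj_mul']
    rw [← h2]; rfl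
  have hx : (star x ⬝ᵥ x).re = ‖x'‖ ^ 2 := by
    have := @inner_self_eq_norm_sq ℂ _ _ _ _ x'
    rw [← this]
    have h2 : inner ℂ x' x' = star x ⬝ᵥ x := by
      rw [PiLp.inner_apply]; simp [RCLike.inner_apply, dotProduct, x', Complex.conj_mul']
    rw [← h2]; rfl
  have hcs : ‖(inner ℂ w' x' : ℂ)‖ ≤ ‖w'‖ * ‖x'‖ := norm_inner_le_norm w' x'
  rw [hinner] at hcs
  have hns : Complex.normSq (star w ⬝ᵥ x) = ‖star w ⬝ᵥ x‖ ^ 2 := by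
    rw [← Complex.sq_norm]
  rw [hns, hw, hx]
  calc ‖star w ⬝ᵥ x‖ ^ 2 ≤ (‖w'‖ * ‖x'‖) ^ 2 := by
        exact pow_le_pow_left₀ (norm_nonneg _) hcs 2
    _ = ‖w'‖ ^ 2 * ‖x'‖ ^ 2 := by ring

lemma key_psd (w : n → ℂ) (Q : ℝ) (hQ : 0 ≤ Q) (hw : Q * (star w ⬝ᵥ w).re ≤ 1) :
    ((1 : Matrix n n ℂ) - (Q : ℂ) • vecMulVec w (star w)).PosSemidef := by
  refine Matrix.PosSemidef.of_dotProduct_mulVec_nonneg ?_ ?_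
  · ext i j
    by_cases h : i = j
    · simp [conjTranspose_apply, vecMulVec_apply, one_apply, h, mul_comm]
    · simp [conjTranspose_apply, vecMulVec_apply, one_apply, h, Ne.symm h, mul_comm]
  · intro x
    have hmv : ((1 : Matrix n n ℂ) - (Q : ℂ) • vecMulVec w (star w)) *ᵥ x
        = x - (Q : ℂ) • ((star w ⬝ᵥ x) • w) := by
      rw [sub_mulVec, one_mulVec, smul_mulVec, vmv_mulVec]
    rw [hmv, dotProduct_sub, dotProduct_smul, dotProduct_smul]
    have hsx : star x ⬝ᵥ w = star (star w ⬝ᵥ x) := by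
      rw [star_dotProduct]
    have hxx : star x ⬝ᵥ x = ((star x ⬝ᵥ x).re : ℂ) := by
      have h0 : 0 ≤ star x ⬝ᵥ x := dotProduct_star_self_nonneg x
      have him := (Complex.le_def.mp h0).2
      exact Complex.ext (by simp) (by simpa using him.symm)
    rw [hsx, Complex.star_def]
    simp only [smul_eq_mul]
    rw [Complex.mul_conj, hxx]
    have hre : (0:ℝ) ≤ (star x ⬝ᵥ x).re - Q * Complex.normSq (star w ⬝ᵥ x) := by
      have hcs := cs_dot w x
      have hx0 : 0 ≤ (star x ⬝ᵥ x).re := by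
        have h0 : 0 ≤ star x ⬝ᵥ x := dotProduct_star_self_nonneg x
        exact (Complex.le_def.mp h0).1
      nlinarith [hcs, hx0, hQ, hw]
    calc (0:ℂ) ≤ (((star x ⬝ᵥ x).re - Q * Complex.normSq (star w ⬝ᵥ x) : ℝ) : ℂ) := by
          exact_mod_cast Complex.zero_le_real.mpr hre
      _ = ((star x ⬝ᵥ x).re : ℂ) - (Q : ℂ) * (Complex.normSq (star w ⬝ᵥ x) : ℂ) := by
          push_cast; ring

end AuxLemmas

/-- If `C₁ ≤ 1/2 < C₂`, then for every `Q ∈ [0, 1−Q₂]`,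
`P_cor^opt(Q) = q₂ − (1−C₁)Q`, i.e. `R_cor^opt(Q) = (1−C₁) + (C₁−q₁)/(1−Q)`. -/
theorem stmt9
    (q₁ q₂ : ℝ) (ρ₁ ρ₂ : Matrix (Fin 2) (Fin 2) ℂ)
    (hq₁ : 0 < q₁) (hq₂ : 0 < q₂) (hq : q₁ + q₂ = 1)
    (hρ₁ : ρ₁.PosSemidef) (htr₁ : ρ₁.trace = 1)
    (hρ₂ : ρ₂.PosSemidef) (htr₂ : ρ₂.trace = 1)
    (hρ0 : (rho0 q₁ q₂ ρ₁ ρ₂).PosDef)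
    (S : Matrix (Fin 2) (Fin 2) ℂ) (hS : S.PosSemidef) (hSS : S * S = rho0 q₁ q₂ ρ₁ ρ₂)
    (ν₁ ν₂ : Fin 2 → ℂ)
    (hν₁ : star ν₁ ⬝ᵥ ν₁ = 1) (hν₂ : star ν₂ ⬝ᵥ ν₂ = 1) (hν₁₂ : star ν₁ ⬝ᵥ ν₂ = 0)
    (C₁ C₂ : ℝ) (hC12 : C₁ ≤ C₂) (hCsum : 1 < C₁ + C₂)
    (hbar₁ : S * ((C₁ : ℂ) • vecMulVec ν₁ (star ν₁)
        + ((1 - C₂ : ℝ) : ℂ) • vecMulVec ν₂ (star ν₂)) * S = (q₁ : ℂ) • ρ₁)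
    (hbar₂ : S * (((1 - C₁ : ℝ) : ℂ) • vecMulVec ν₁ (star ν₁)
        + (C₂ : ℂ) • vecMulVec ν₂ (star ν₂)) * S = (q₂ : ℂ) • ρ₂)
    (ρ11 ρ22 : ℝ) (ρ12 : ℂ)
    (h11 : (ρ11 : ℂ) = star ν₁ ⬝ᵥ (rho0 q₁ q₂ ρ₁ ρ₂ *ᵥ ν₁))
    (h22 : (ρ22 : ℂ) = star ν₂ ⬝ᵥ (rho0 q₁ q₂ ρ₁ ρ₂ *ᵥ ν₂))
    (h12 : ρ12 = star ν₁ ⬝ᵥ (rho0 q₁ q₂ ρ₁ ρ₂ *ᵥ ν₂))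
    (hC₁ : C₁ ≤ 1 / 2) (hC₂ : 1 / 2 < C₂) :
    ∀ Q ∈ Set.Icc (0 : ℝ) (1 - (ρ22 + ‖ρ12‖ ^ 2 / ρ22)),
      PcorOpt Q q₁ q₂ ρ₁ ρ₂ = q₂ - (1 - C₁) * Q := by
  intro Q hQint
  obtain ⟨hQ0, hQle⟩ := hQint
  -- basic setup
  set R0 := rho0 q₁ q₂ ρ₁ ρ₂ with hR0
  set P1 := vecMulVec ν₁ (star ν₁) with hP1
  set P2 := vecMulVec ν₂ (star ν₂) with hP2
  set Rb1 := (C₁ : ℂ) • P1 + ((1 - C₂ : ℝ) : ℂ) • P2 with hRb1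
  set Rb2 := ((1 - C₁ : ℝ) : ℂ) • P1 + (C₂ : ℂ) • P2 with hRb2
  have hH : R0.IsHermitian := hρ0.1
  have hSH : Sᴴ = S := hS.1
  have hdet0 : IsUnit R0.det := hρ0.det_pos.ne'.isUnit
  have hdetS : IsUnit S.det := by
    rw [← hSS, Matrix.det_mul] at hdet0
    exact isUnit_of_mul_isUnit_left hdet0
  have hST : S * S⁻¹ = 1 := Matrix.mul_nonsing_inv S hdetS
  have hTS : S⁻¹ * S = 1 := Matrix.nonsing_inv_mul S hdetS
  have hTH : S⁻¹ᴴ = S⁻¹ := by rw [Matrix.conjTranspose_nonsing_inv, hSH]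
  have h21 : star ν₂ ⬝ᵥ ν₁ = 0 := by
    rw [star_dotProduct, hν₁₂, star_zero]
  have hres : P1 + P2 = 1 := resolution ν₁ ν₂ hν₁ hν₂ hν₁₂
  have hP1psd : P1.PosSemidef := vmv_posSemidef ν₁
  have hP2psd : P2.PosSemidef := vmv_posSemidef ν₂
  -- ===== upper bound =====
  have hub : ∀ A₀ A₁ A₂ : Matrix (Fin 2) (Fin 2) ℂ, IsPOVM A₀ A₁ A₂ →
      PIof q₁ q₂ ρ₁ ρ₂ A₀ = Q → Pcor q₁ q₂ ρ₁ ρ₂ A₁ A₂ ≤ q₂ - (1 - C₁) * Q := by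
    rintro A₀ A₁ A₂ ⟨hA₀, hA₁, hA₂, hAsum⟩ hPIA
    set N₀ := S * A₀ * S with hN₀
    set N₁ := S * A₁ * S with hN₁
    set N₂ := S * A₂ * S with hN₂
    have hN₀psd : N₀.PosSemidef := by
      have := hA₀.mul_mul_conjTranspose_same S
      rwa [hSH] at this
    have hN₁psd : N₁.PosSemidef := by
      have := hA₁.mul_mul_conjTranspose_same S
      rwa [hSH] at this
    have hN₂psd : N₂.PosSemidef := by
      have := hA₂.mul_mul_conjTranspose_same S
      rwa [hSH] at this
    have hNsum : N₀ + N₁ + N₂ = R0 := by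
      have h : S * A₀ * S + S * A₁ * S + S * A₂ * S = S * (A₀ + A₁ + A₂) * S := by
        noncomm_ring
      rw [hN₀, hN₁, hN₂, h, hAsum, Matrix.mul_one, hSS]
    have htrace1 : Matrix.trace (Rb1 * N₁) = (q₁ : ℂ) * Matrix.trace (ρ₁ * A₁) := by
      calc Matrix.trace (Rb1 * N₁) = Matrix.trace (Rb1 * S * A₁ * S) := by
            rw [hN₁, ← Matrix.mul_assoc, ← Matrix.mul_assoc]
        _ = Matrix.trace (S * (Rb1 * S) * A₁) := by rw [trace_mul_cycle]
        _ = Matrix.trace ((q₁ : ℂ) • ρ₁ * A₁) := by rw [← Matrix.mul_assoc, hbar₁]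
        _ = (q₁ : ℂ) * Matrix.trace (ρ₁ * A₁) := by
            rw [smul_mul_assoc, trace_smul, smul_eq_mul]
    have htrace2 : Matrix.trace (Rb2 * N₂) = (q₂ : ℂ) * Matrix.trace (ρ₂ * A₂) := by
      calc Matrix.trace (Rb2 * N₂) = Matrix.trace (Rb2 * S * A₂ * S) := by
            rw [hN₂, ← Matrix.mul_assoc, ← Matrix.mul_assoc]
        _ = Matrix.trace (S * (Rb2 * S) * A₂) := by rw [trace_mul_cycle]
        _ = Matrix.trace ((q₂ : ℂ) • ρ₂ * A₂) := by rw [← Matrix.mul_assoc, hbar₂]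
        _ = (q₂ : ℂ) * Matrix.trace (ρ₂ * A₂) := by
            rw [smul_mul_assoc, trace_smul, smul_eq_mul]
    have htraceQ : (Matrix.trace N₀).re = Q := by
      have h : Matrix.trace N₀ = Matrix.trace (R0 * A₀) := by
        rw [hN₀, trace_mul_cycle, hSS]
      rw [h]
      exact hPIA
    have htraceq2 : Matrix.trace (Rb2 * R0) = (q₂ : ℂ) := by
      calc Matrix.trace (Rb2 * R0) = Matrix.trace (Rb2 * S * S) := by
            rw [← hSS, ← Matrix.mul_assoc]
        _ = Matrix.trace (S * Rb2 * S) := by rw [trace_mul_cycle]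
        _ = Matrix.trace ((q₂ : ℂ) • ρ₂) := by rw [hbar₂]
        _ = (q₂ : ℂ) := by rw [trace_smul, htr₂, smul_eq_mul, mul_one]
    have hiden : Rb1 * N₁ + Rb2 * N₂ = Rb2 * R0 - Rb2 * N₀ - (Rb2 - Rb1) * N₁ := by
      rw [← hNsum]; noncomm_ring
    have hdiffeq : Rb2 - Rb1 = ((1 - 2*C₁ : ℝ) : ℂ) • P1 + ((2*C₂ - 1 : ℝ) : ℂ) • P2 := by
      rw [hRb1, hRb2]; push_cast; module
    have hdiffpsd : (Rb2 - Rb1).PosSemidef := by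
      rw [hdiffeq]
      exact (smul_posSemidef (by linarith) hP1psd).add (smul_posSemidef (by linarith) hP2psd)
    have hRb2eq : Rb2 = ((1 - C₁ : ℝ) : ℂ) • (1 : Matrix (Fin 2) (Fin 2) ℂ)
        + ((C₁ + C₂ - 1 : ℝ) : ℂ) • P2 := by
      rw [hRb2, ← hres]; push_cast; module
    have hsplit : (Matrix.trace (Rb2 * N₀)).re
        = (1 - C₁) * (Matrix.trace N₀).re + (C₁ + C₂ - 1) * (Matrix.trace (P2 * N₀)).re := by
      rw [hRb2eq, Matrix.add_mul, smul_mul_assoc, smul_mul_assoc, Matrix.one_mul,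
        trace_add, trace_smul, trace_smul]
      simp [smul_eq_mul, Complex.add_re, Complex.re_ofReal_mul]
    have hpos1 : 0 ≤ (Matrix.trace (P2 * N₀)).re := trace_mul_re_nonneg hP2psd hN₀psd
    have hpos2 : 0 ≤ (Matrix.trace ((Rb2 - Rb1) * N₁)).re :=
      trace_mul_re_nonneg hdiffpsd hN₁psd
    have hPcorEq : Pcor q₁ q₂ ρ₁ ρ₂ A₁ A₂
        = (Matrix.trace (Rb1 * N₁)).re + (Matrix.trace (Rb2 * N₂)).re := by
      show q₁ * (Matrix.trace (ρ₁ * A₁)).re + q₂ * (Matrix.trace (ρ₂ * A₂)).re = _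
      rw [htrace1, htrace2, Complex.re_ofReal_mul, Complex.re_ofReal_mul]
    have hre : (Matrix.trace (Rb1 * N₁)).re + (Matrix.trace (Rb2 * N₂)).re
        = q₂ - (Matrix.trace (Rb2 * N₀)).re - (Matrix.trace ((Rb2 - Rb1) * N₁)).re := by
      have h' := congrArg (fun M => (Matrix.trace M).re) hiden
      simp only [trace_add, trace_sub, Complex.add_re, Complex.sub_re] at h'
      rw [htraceq2] at h'
      simpa using h'
    rw [hPcorEq, hre]
    rw [hsplit, htraceQ]
    linarith [hpos1, hpos2, mul_nonneg (by linarith : (0:ℝ) ≤ C₁ + C₂ - 1) hpos1]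
  -- ===== entries of ρ₀ in the ν-basis =====
  have hρ1122 : ρ11 + ρ22 = 1 := by
    have htr0 : Matrix.trace R0 = 1 := by
      rw [hR0]
      show Matrix.trace ((q₁ : ℂ) • ρ₁ + (q₂ : ℂ) • ρ₂) = 1
      rw [trace_add, trace_smul, trace_smul, htr₁, htr₂]
      simp only [smul_eq_mul, mul_one]
      exact_mod_cast hq
    have h2 : Matrix.trace R0 = (ρ11 : ℂ) + (ρ22 : ℂ) := by
      calc Matrix.trace R0 = Matrix.trace (R0 * 1) := by rw [Matrix.mul_one]
        _ = Matrix.trace (R0 * P1) + Matrix.trace (R0 * P2) := by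
            rw [← hres, Matrix.mul_add, trace_add]
        _ = (ρ11 : ℂ) + (ρ22 : ℂ) := by
            rw [hP1, hP2, mul_vmv, mul_vmv, trace_vmv, trace_vmv, ← h11, ← h22]
    rw [htr0] at h2
    exact_mod_cast h2.symm
  have hρ22pos : 0 < ρ22 := by
    have hne : ν₂ ≠ 0 := by
      intro h
      rw [h] at hν₂
      simp at hν₂
    have h := hρ0.dotProduct_mulVec_pos hne
    rw [← h22] at h
    exact Complex.zero_lt_real.mp h
  have h21ρ : star ν₂ ⬝ᵥ (R0 *ᵥ ν₁) = star ρ12 := by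
    rw [herm_swap hH ν₁ ν₂, ← h12]
  set d : ℝ := ρ11 * ρ22 - Complex.normSq ρ12 with hd
  have hdc : (d : ℂ) = (ρ11 : ℂ) * (ρ22 : ℂ) - ρ12 * star ρ12 := by
    rw [hd]
    push_cast
    rw [Complex.star_def, Complex.mul_conj]
  have hdpos : 0 < d := by
    set x := (ρ22 : ℂ) • ν₁ - (star ρ12) • ν₂ with hx
    have hd1 : star ν₁ ⬝ᵥ x = (ρ22 : ℂ) := by
      rw [hx, dotProduct_sub, dotProduct_smul, dotProduct_smul, hν₁, hν₁₂]
      simp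
    have hxne : x ≠ 0 := by
      intro h
      rw [h, dotProduct_zero] at hd1
      exact hρ22pos.ne' (by exact_mod_cast hd1.symm)
    have hval := hρ0.dotProduct_mulVec_pos hxne
    have hcompute : star x ⬝ᵥ (R0 *ᵥ x) = ((ρ22 * d : ℝ) : ℂ) := by
      have hsx : star x = (ρ22 : ℂ) • star ν₁ - ρ12 • star ν₂ := by
        rw [hx, star_sub, star_smul, star_smul, star_star]
        rw [Complex.star_def, Complex.conj_ofReal]
      have hmx : R0 *ᵥ x = (ρ22 : ℂ) • (R0 *ᵥ ν₁) - (star ρ12) • (R0 *ᵥ ν₂) := by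
        rw [hx, mulVec_sub, mulVec_smul, mulVec_smul]
      rw [hsx, hmx, sub_dotProduct, smul_dotProduct, smul_dotProduct,
        dotProduct_sub, dotProduct_sub, dotProduct_smul, dotProduct_smul,
        dotProduct_smul, dotProduct_smul]
      rw [← h11, ← h12, h21ρ, ← h22]
      rw [show ((ρ22 * d : ℝ) : ℂ) = (ρ22 : ℂ) * (d : ℂ) from by push_cast; ring, hdc]
      simp only [smul_eq_mul]
      ring
    rw [hcompute] at hval
    have h := Complex.zero_lt_real.mp hval
    nlinarith [hρ22pos, h]
  -- ===== the optimal inconclusive operator =====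
  set T := S⁻¹ with hT
  set w := T *ᵥ ν₁ with hwdef
  set z := (T * T) *ᵥ ν₁ with hzdef
  have hz : R0 *ᵥ z = ν₁ := by
    rw [hzdef, mulVec_mulVec]
    have h : R0 * (T * T) = 1 := by
      rw [← hSS, Matrix.mul_assoc, ← Matrix.mul_assoc S T T, hST, Matrix.one_mul, hST]
    rw [h, one_mulVec]
  set α := star ν₁ ⬝ᵥ z with hα
  set β := star ν₂ ⬝ᵥ z with hβ
  have hzd : z = α • ν₁ + β • ν₂ := by
    calc z = 1 *ᵥ z := (one_mulVec z).symm
      _ = (P1 + P2) *ᵥ z := by rw [hres]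
      _ = α • ν₁ + β • ν₂ := by rw [add_mulVec, hP1, hP2, vmv_mulVec, vmv_mulVec]
  have hz' : R0 *ᵥ (α • ν₁ + β • ν₂) = ν₁ := by rw [← hzd]; exact hz
  have h1eq : α * (ρ11 : ℂ) + β * ρ12 = 1 := by
    have h := congrArg (fun v => star ν₁ ⬝ᵥ v) hz'
    simp only [mulVec_add, mulVec_smul, dotProduct_add, dotProduct_smul, smul_eq_mul] at h
    rw [← h11, ← h12, hν₁] at h
    exact h
  have h2eq : α * star ρ12 + β * (ρ22 : ℂ) = 0 := by
    have h := congrArg (fun v => star ν₂ ⬝ᵥ v) hz'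
    simp only [mulVec_add, mulVec_smul, dotProduct_add, dotProduct_smul, smul_eq_mul] at h
    rw [h21ρ, ← h22, h21] at h
    exact h
  have hd0 : (d : ℂ) ≠ 0 := by exact_mod_cast hdpos.ne'
  have hαval : α = ((ρ22 / d : ℝ) : ℂ) := by
    have hkey : α * (d : ℂ) = (ρ22 : ℂ) := by
      rw [hdc]
      linear_combination (ρ22 : ℂ) * h1eq - ρ12 * h2eq
    have h : α = (ρ22 : ℂ) / (d : ℂ) := by
      rw [eq_div_iff hd0]; exact hkey
    rw [h]; push_cast; ring
  have hww : star w ⬝ᵥ w = α := by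
    rw [hwdef, star_mulVec, hTH, ← dotProduct_mulVec, mulVec_mulVec, ← hzdef]
  have hcs : Q * (star w ⬝ᵥ w).re ≤ 1 := by
    rw [hww, hαval, Complex.ofReal_re]
    have habs : ‖ρ12‖ ^ 2 = Complex.normSq ρ12 := Complex.sq_norm _
    rw [habs] at hQle
    have hmain : Q * ρ22 ≤ d := by
      have h1 : Q * ρ22 ≤ (1 - (ρ22 + Complex.normSq ρ12 / ρ22)) * ρ22 :=
        mul_le_mul_of_nonneg_right hQle hρ22pos.le
      have hρ11 : ρ11 = 1 - ρ22 := by linarith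
      have h2 : (1 - (ρ22 + Complex.normSq ρ12 / ρ22)) * ρ22
          = ρ11 * ρ22 - Complex.normSq ρ12 := by
        rw [hρ11]; field_simp; ring
      rw [hd]; linarith
    calc Q * (ρ22 / d) = (Q * ρ22) / d := by ring
      _ ≤ 1 := by rw [div_le_one hdpos]; exact hmain
  set M0 : Matrix (Fin 2) (Fin 2) ℂ := (Q : ℂ) • vecMulVec w (star w) with hM0
  set M2 : Matrix (Fin 2) (Fin 2) ℂ := 1 - M0 with hM2
  have hpovm : IsPOVM M0 0 M2 := by
    refine ⟨smul_posSemidef hQ0 (vmv_posSemidef w), Matrix.PosSemidef.zero, ?_, ?_⟩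
    · rw [hM2, hM0]
      exact key_psd w Q hQ0 hcs
    · rw [hM2]
      noncomm_ring
  have hSMS : S * M0 * S = (Q : ℂ) • P1 := by
    rw [hM0, mul_smul_comm, smul_mul_assoc]
    congr 1
    rw [mul_vmv, vmv_mul]
    have h1 : S *ᵥ w = ν₁ := by rw [hwdef, mulVec_mulVec, hST, one_mulVec]
    have h2 : star w ᵥ* S = star ν₁ := by
      conv_lhs => rw [← hSH]
      rw [← star_mulVec, h1]
    rw [h1, h2, hP1]
  have hPIval : PIof q₁ q₂ ρ₁ ρ₂ M0 = Q := by
    show (Matrix.trace (rho0 q₁ q₂ ρ₁ ρ₂ * M0)).re = Q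
    rw [← hR0, ← hSS, Matrix.mul_assoc, trace_mul_comm, hSMS, trace_smul, hP1, trace_vmv, hν₁]
    simp
  have hPcorval : Pcor q₁ q₂ ρ₁ ρ₂ 0 M2 = q₂ - (1 - C₁) * Q := by
    show q₁ * (Matrix.trace (ρ₁ * 0)).re + q₂ * (Matrix.trace (ρ₂ * M2)).re = _
    rw [Matrix.mul_zero, trace_zero]
    simp only [Complex.zero_re, mul_zero, zero_add]
    have hRb2P1 : Rb2 * P1 = ((1 - C₁ : ℝ) : ℂ) • P1 := by
      rw [hRb2, hP1, hP2, Matrix.add_mul, smul_mul_assoc, smul_mul_assoc,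
        vmv_mul_vmv, vmv_mul_vmv, hν₁, h21, one_smul, zero_smul, smul_zero, add_zero]
    have hkey : (q₂ : ℂ) * Matrix.trace (ρ₂ * M0) = ((Q * (1 - C₁) : ℝ) : ℂ) := by
      calc (q₂ : ℂ) * Matrix.trace (ρ₂ * M0)
          = Matrix.trace ((q₂ : ℂ) • ρ₂ * M0) := by
            rw [smul_mul_assoc, trace_smul, smul_eq_mul]
        _ = Matrix.trace (S * Rb2 * S * M0) := by rw [hbar₂]
        _ = Matrix.trace (Rb2 * (S * M0 * S)) := by
            rw [Matrix.mul_assoc S Rb2 S, ← trace_mul_cycle,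
              Matrix.mul_assoc Rb2 S M0, Matrix.mul_assoc Rb2 (S * M0) S]
        _ = (Q : ℂ) * Matrix.trace (Rb2 * P1) := by
            rw [hSMS, mul_smul_comm, trace_smul, smul_eq_mul]
        _ = ((Q * (1 - C₁) : ℝ) : ℂ) := by
            rw [hRb2P1, trace_smul, hP1, trace_vmv, hν₁]
            simp only [smul_eq_mul]
            push_cast
            ring
    have hre2 : q₂ * (Matrix.trace (ρ₂ * M0)).re = Q * (1 - C₁) := by
      have h := congrArg Complex.re hkey
      rwa [Complex.re_ofReal_mul, Complex.ofReal_re] at h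
    rw [hM2, Matrix.mul_sub, Matrix.mul_one, trace_sub, Complex.sub_re, htr₂]
    simp only [Complex.one_re]
    have hexp : q₂ * (1 - (Matrix.trace (ρ₂ * M0)).re)
        = q₂ - q₂ * (Matrix.trace (ρ₂ * M0)).re := by ring
    rw [hexp, hre2]
    ring
  exact IsGreatest.csSup_eq ⟨⟨M0, 0, M2, hpovm, hPIval, hPcorval⟩,
    by rintro x ⟨A₀, A₁, A₂, hp, hpi, rfl⟩; exact hub A₀ A₁ A₂ hp hpi⟩


end FRIR
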